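/- There exists a holomorphic (regular) function β on a neighborhood of (−π, π] with β(0) = 0 satisfying cos(β(φ)) = 1 + (cos φ − 1)e^{2πi/3} for all φ ∈ (−π, π]. -/
import Mathlib
open Real Set

lemma sqrt_mul_self' (z : ℂ) (hz : z ≠ 0) : z ^ (1/2:ℂ) * z ^ (1/2:ℂ) = z := by
  rw [← Complex.cpow_add _ _ hz]; norm_num

lemma re_sqrt_nonneg' (z : ℂ) (hz : z ≠ 0) : 0 ≤ (z ^ (1/2:ℂ)).re := by
  rw [Complex.cpow_def_of_ne_zero hz, Complex.exp_re]
  apply mul_nonneg (Real.exp_pos _).le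
  apply Real.cos_nonneg_of_mem_Icc
  have h := Complex.abs_arg_le_pi z
  rw [abs_le] at h
  constructor <;>
  · simp only [Complex.mul_im, Complex.log_im, Complex.log_re]
    norm_num
    linarith [h.1, h.2]

lemma one_le_re_sqrt (z : ℂ) (hz : 1 ≤ z.re) : 1 ≤ (z ^ (1/2:ℂ)).re := by
  have hz0 : z ≠ 0 := by
    intro h; rw [h] at hz; simp at hz; linarith
  have h0 := re_sqrt_nonneg' z hz0
  have hm := sqrt_mul_self' z hz0
  have : z.re = (z ^ (1/2:ℂ)).re * (z ^ (1/2:ℂ)).re - (z ^ (1/2:ℂ)).im * (z ^ (1/2:ℂ)).im := by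
    rw [← Complex.mul_re, hm]
  nlinarith [sq_nonneg ((z ^ (1/2:ℂ)).im)]

theorem exists_regular_branch_arccos :
    ∃ (U : Set ℂ) (β : ℂ → ℂ),
      IsOpen U ∧
      (∀ φ ∈ Ioc (-π) π, (φ : ℂ) ∈ U) ∧
      DifferentiableOn ℂ β U ∧
      β 0 = 0 ∧
      ∀ φ ∈ Ioc (-π) π,
        Complex.cos (β (φ : ℂ)) =
          1 + ((Real.cos φ : ℂ) - 1) * Complex.exp (2 * Real.pi * Complex.I / 3) := by
  set c : ℂ := Complex.exp (Real.pi * Complex.I / 3) with hcdef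
  set w : ℂ → ℂ := fun z => c * Complex.sin (z / 2) with hwdef
  set q : ℂ → ℂ := fun z => 1 - (w z) ^ 2 with hqdef
  set s : ℂ → ℂ := fun z => (q z) ^ (1/2 : ℂ) with hsdef
  set g : ℂ → ℂ := fun z => Complex.I * w z + s z with hgdef
  set β : ℂ → ℂ := fun z => -2 * Complex.I * Complex.log (g z) with hβdef
  set V : Set ℂ := q ⁻¹' Complex.slitPlane with hVdef
  have hqcont : Continuous q := by fun_prop
  have hVopen : IsOpen V := Complex.isOpen_slitPlane.preimage hqcont
  have hwdiff : Differentiable ℂ w := by fun_prop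
  have hgdiff : ∀ z ∈ V, DifferentiableAt ℂ g z := by
    intro z hz
    apply DifferentiableAt.add
    · exact (differentiableAt_const _).mul (hwdiff z)
    · exact DifferentiableAt.cpow (((differentiableAt_const _).sub ((hwdiff z).pow 2)))
        (differentiableAt_const _) hz
  set U : Set ℂ := V ∩ g ⁻¹' Complex.slitPlane with hUdef
  have hUopen : IsOpen U := by
    apply ContinuousOn.isOpen_inter_preimage _ hVopen Complex.isOpen_slitPlane
    exact fun z hz => (hgdiff z hz).continuousAt.continuousWithinAt
  -- value of c
  have hcval : c = Complex.ofReal (1/2) + Complex.ofReal (Real.sqrt 3 / 2) * Complex.I := by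
    rw [hcdef, show (Real.pi : ℂ) * Complex.I / 3 = ((Real.pi/3 : ℝ) : ℂ) * Complex.I by
      push_cast; ring, Complex.exp_mul_I, ← Complex.ofReal_cos, ← Complex.ofReal_sin,
      Real.cos_pi_div_three, Real.sin_pi_div_three]
  have h3 : Real.sqrt 3 ^ 2 = 3 := Real.sq_sqrt (by norm_num)
  -- values at real points
  have hwφ : ∀ φ : ℝ, w (φ:ℂ) = c * ((Real.sin (φ/2) : ℝ) : ℂ) := by
    intro φ
    rw [hwdef]
    simp only
    rw [show ((φ:ℂ)/2) = ((φ/2 : ℝ) : ℂ) by push_cast; ring, ← Complex.ofReal_sin]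
  have hqre : ∀ φ : ℝ, (q (φ:ℂ)).re = 1 + (Real.sin (φ/2))^2 / 2 := by
    intro φ
    rw [hqdef]
    simp only
    rw [hwφ, hcval]
    simp only [pow_two, Complex.sub_re, Complex.one_re, Complex.mul_re, Complex.mul_im,
      Complex.add_re, Complex.add_im, Complex.ofReal_re, Complex.ofReal_im,
      Complex.I_re, Complex.I_im]
    nlinarith [h3]
  have hmemV : ∀ φ : ℝ, (φ:ℂ) ∈ V := by
    intro φ
    rw [hVdef]
    simp only [mem_preimage]
    rw [Complex.mem_slitPlane_iff]
    left
    rw [hqre]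
    positivity
  have hmemU : ∀ φ : ℝ, (φ:ℂ) ∈ U := by
    intro φ
    refine ⟨hmemV φ, ?_⟩
    simp only [mem_preimage]
    rw [Complex.mem_slitPlane_iff]
    left
    have hq1 : 1 ≤ (q (φ:ℂ)).re := by
      rw [hqre]; nlinarith [sq_nonneg (Real.sin (φ/2))]
    have hs1 : 1 ≤ (s (φ:ℂ)).re := one_le_re_sqrt _ hq1
    have hiw : (Complex.I * w (φ:ℂ)).re = -(Real.sqrt 3 / 2) * Real.sin (φ/2) := by
      rw [hwφ, hcval]
      simp only [Complex.mul_re, Complex.mul_im, Complex.add_re, Complex.add_im,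
        Complex.ofReal_re, Complex.ofReal_im, Complex.I_re, Complex.I_im]
      ring
    have hsin := Real.sin_sq_le_one (φ/2)
    have hs3 : 0 ≤ Real.sqrt 3 := Real.sqrt_nonneg 3
    rw [hgdef]
    simp only [Complex.add_re]
    rw [hiw]
    nlinarith [hsin, h3, hs1, hs3]
  -- key cos identity
  have key : ∀ z ∈ V, Complex.cos (β z) = 1 - 2 * (w z)^2 := by
    intro z hz
    have hq0 : q z ≠ 0 := Complex.slitPlane_ne_zero hz
    have hss : s z * s z = q z := sqrt_mul_self' _ hq0
    have hginv : g z * (s z - Complex.I * w z) = 1 := by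
      have hI : Complex.I * Complex.I = -1 := Complex.I_mul_I
      have expand : g z * (s z - Complex.I * w z)
          = s z * s z - (Complex.I * Complex.I) * (w z)^2 := by rw [hgdef]; ring
      rw [expand, hI, hss, hqdef]; ring
    have hgne : g z ≠ 0 := by
      intro h
      rw [h, zero_mul] at hginv
      exact zero_ne_one hginv
    have hβI : β z * Complex.I = 2 * Complex.log (g z) := by
      rw [hβdef]
      simp only
      have hI : Complex.I * Complex.I = -1 := Complex.I_mul_I
      linear_combination (-2) * Complex.log (g z) * hI
    have hexp1 : Complex.exp (β z * Complex.I) = g z ^ 2 := by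
      rw [hβI, two_mul, Complex.exp_add, Complex.exp_log hgne]; ring
    have hexp2 : Complex.exp (-(β z * Complex.I)) = (s z - Complex.I * w z) ^ 2 := by
      rw [hβI, Complex.exp_neg, two_mul, Complex.exp_add, Complex.exp_log hgne]
      have hinv : s z - Complex.I * w z = (g z)⁻¹ := eq_inv_of_mul_eq_one_right hginv
      rw [mul_inv, ← hinv]
      ring
    have hcos : Complex.cos (β z) =
        (Complex.exp (β z * Complex.I) + Complex.exp (-(β z * Complex.I))) / 2 := by
      rw [Complex.cos, neg_mul]
    rw [hcos, hexp1, hexp2, hgdef]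
    simp only
    have hI : Complex.I * Complex.I = -1 := Complex.I_mul_I
    have hss' : s z * s z = 1 - w z ^ 2 := by rw [hss, hqdef]
    linear_combination hss' + (w z)^2 * hI
  -- c^2 is the cube root of unity exponential
  have hc2 : c ^ 2 = Complex.exp (2 * Real.pi * Complex.I / 3) := by
    rw [hcdef, sq, ← Complex.exp_add]
    ring_nf
  refine ⟨U, β, hUopen, fun φ _ => hmemU φ, ?_, ?_, ?_⟩
  · intro z hz
    exact (((differentiableAt_const _).mul
      (Complex.differentiableAt_log hz.2 |>.comp z (hgdiff z hz.1)))).differentiableWithinAt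
  · have hw0 : w 0 = 0 := by simp [hwdef]
    have hq0 : q 0 = 1 := by simp [hqdef, hw0]
    have hs0 : s 0 = 1 := by rw [hsdef]; simp only [hq0]; exact Complex.one_cpow _
    have hg0 : g 0 = 1 := by rw [hgdef]; simp [hw0, hs0]
    rw [hβdef]
    simp [hg0]
  · intro φ hφ
    rw [key _ (hmemV φ), ← hc2, hwφ φ]
    have hcφ : Complex.cos (φ:ℂ) = 1 - 2 * Complex.sin ((φ:ℂ)/2) ^ 2 := by
      have h2 : (φ:ℂ) = 2 * ((φ:ℂ)/2) := by ring
      rw [h2, Complex.cos_two_mul]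
      have hpyth := Complex.sin_sq_add_cos_sq ((φ:ℂ)/2)
      ring_nf
      ring_nf at hpyth
      linear_combination 2 * hpyth
    have hsφ : Complex.sin ((φ:ℂ)/2) = ((Real.sin (φ/2) : ℝ) : ℂ) := by
      rw [show ((φ:ℂ)/2) = ((φ/2 : ℝ) : ℂ) by push_cast; ring, ← Complex.ofReal_sin]
    rw [Complex.ofReal_cos, hcφ, hsφ]
    ring
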